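/- Let d_i, d_k ≥ 0 and γ > 0. There exists a real number r with r ≥ max(d_i, d_k) satisfying sqrt(r² − d_i²) + sqrt(r² − d_k²) = γ if and only if γ² ≥ |d_k² − d_i²|. -/

import Mathlib

/-- For `dᵢ, d_k ≥ 0` and `γ > 0`, there is an `r ≥ max dᵢ d_k` with
`sqrt(r² − dᵢ²) + sqrt(r² − d_k²) = γ` if and only if `γ² ≥ |d_k² − dᵢ²|`. -/
theorem stmt13 (di dk γ : ℝ) (hdi : 0 ≤ di) (hdk : 0 ≤ dk) (hγ : 0 < γ) :
    (∃ r : ℝ, max di dk ≤ r ∧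
      Real.sqrt (r ^ 2 - di ^ 2) + Real.sqrt (r ^ 2 - dk ^ 2) = γ) ↔
    |dk ^ 2 - di ^ 2| ≤ γ ^ 2 := by
  constructor
  · rintro ⟨r, hr, heq⟩
    have hri : di ≤ r := le_trans (le_max_left _ _) hr
    have hrk : dk ≤ r := le_trans (le_max_right _ _) hr
    have h1 : 0 ≤ r ^ 2 - di ^ 2 := by nlinarith
    have h2 : 0 ≤ r ^ 2 - dk ^ 2 := by nlinarith
    set a := Real.sqrt (r ^ 2 - di ^ 2) with ha
    set b := Real.sqrt (r ^ 2 - dk ^ 2) with hb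
    have ha2 : a ^ 2 = r ^ 2 - di ^ 2 := Real.sq_sqrt h1
    have hb2 : b ^ 2 = r ^ 2 - dk ^ 2 := Real.sq_sqrt h2
    have ha0 : 0 ≤ a := Real.sqrt_nonneg _
    have hb0 : 0 ≤ b := Real.sqrt_nonneg _
    rw [abs_le]
    constructor <;> nlinarith [sq_nonneg (a + b), sq_nonneg (a - b)]
  · intro h
    rw [abs_le] at h
    set D := dk ^ 2 - di ^ 2 with hD
    set t := (γ ^ 2 + D) / (2 * γ) with ht
    have ht0 : 0 ≤ t := by
      apply div_nonneg _ (by linarith)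
      linarith [h.1]
    have hs0 : 0 ≤ di ^ 2 + t ^ 2 := by positivity
    refine ⟨Real.sqrt (di ^ 2 + t ^ 2), ?_, ?_⟩
    · have hr2 : (Real.sqrt (di ^ 2 + t ^ 2)) ^ 2 = di ^ 2 + t ^ 2 := Real.sq_sqrt hs0
      have hr0 : 0 ≤ Real.sqrt (di ^ 2 + t ^ 2) := Real.sqrt_nonneg _
      have htk : dk ^ 2 ≤ di ^ 2 + t ^ 2 := by
        have : t ^ 2 - D = ((γ ^ 2 - D) / (2 * γ)) ^ 2 := by
          rw [ht]
          field_simp [ht]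
          ring
        nlinarith [sq_nonneg ((γ ^ 2 - D) / (2 * γ))]
      apply max_le <;> nlinarith
    · have hr2 : (Real.sqrt (di ^ 2 + t ^ 2)) ^ 2 = di ^ 2 + t ^ 2 := Real.sq_sqrt hs0
      have e1 : (Real.sqrt (di ^ 2 + t ^ 2)) ^ 2 - di ^ 2 = t ^ 2 := by linarith
      have e2 : (Real.sqrt (di ^ 2 + t ^ 2)) ^ 2 - dk ^ 2
          = ((γ ^ 2 - D) / (2 * γ)) ^ 2 := by
        rw [hr2]
        rw [ht, hD]
        field_simp [ht, hD]
        ring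
      rw [e1, e2, Real.sqrt_sq ht0, Real.sqrt_sq (by
        apply div_nonneg _ (by linarith)
        linarith [h.2])]
      rw [ht, hD]
      field_simp
      ring
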